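/- Let n > 1 and let R = ℤ[x₁,x₂]/⟨x₁^(n+1), x₂(a·x₁ + x₂)⟩ for an integer a. If there is a graded ring isomorphism ℤ[x₁,x₂]/⟨x₁^(n+1), x₂(a·x₁+x₂)⟩ ≅ ℤ[x₁,x₂]/⟨x₁^(n+1), x₂(a'·x₁+x₂)⟩, then |a| = |a'|. Conversely if |a| = |a'| the rings are isomorphic. -/

import Mathlib

open MvPolynomial


open MvPolynomial

noncomputable abbrev e0 : Fin 2 →₀ ℕ := Finsupp.single 0 1
noncomputable abbrev e1 : Fin 2 →₀ ℕ := Finsupp.single 1 1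
noncomputable abbrev D20 : Fin 2 →₀ ℕ := Finsupp.single 0 2
noncomputable abbrev D11 : Fin 2 →₀ ℕ := e0 + e1
noncomputable abbrev D02 : Fin 2 →₀ ℕ := Finsupp.single 1 2

lemma deg2 (d : Fin 2 →₀ ℕ) : d.degree = d 0 + d 1 := by
  rw [Finsupp.degree_apply, Finset.sum_subset (Finset.subset_univ _)]
  · simp [Fin.sum_univ_two]
  · intro i _ hi
    simpa using Finsupp.notMem_support_iff.mp hi

lemma fin2_ext {d e : Fin 2 →₀ ℕ} (h0 : d 0 = e 0) (h1 : d 1 = e 1) : d = e := by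
  ext i; fin_cases i <;> assumption

lemma classify1 {d : Fin 2 →₀ ℕ} (h : d.degree = 1) : d = e0 ∨ d = e1 := by
  rw [deg2] at h
  rcases Nat.eq_zero_or_pos (d 0) with h0 | h0
  · right; exact fin2_ext (by simp [Finsupp.single_apply]; omega) (by simp [Finsupp.single_apply]; omega)
  · left; exact fin2_ext (by simp [Finsupp.single_apply]; omega) (by simp [Finsupp.single_apply]; omega)

lemma e0_ne_e1 : e0 ≠ e1 := by
  intro h; have := DFunLike.congr_fun h 0; simp [Finsupp.single_apply] at this

lemma linear_form {f : MvPolynomial (Fin 2) ℤ} (hf : f.IsHomogeneous 1) :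
    f = C (coeff e0 f) * X 0 + C (coeff e1 f) * X 1 := by
  ext d
  rw [coeff_add, coeff_C_mul, coeff_C_mul, coeff_X', coeff_X']
  by_cases h0 : d = e0
  · subst h0
    have : ¬ (Finsupp.single 1 1 = e0) := by
      intro h; have := DFunLike.congr_fun h 0; simp [Finsupp.single_apply] at this
    simp [this]
  · by_cases h1 : d = e1
    · subst h1
      have : ¬ (Finsupp.single 0 1 = e1) := by
        intro h; have := DFunLike.congr_fun h 0; simp [Finsupp.single_apply] at this
      simp [this]
    · have hd : d.degree ≠ 1 := fun h => by rcases classify1 h with h|h <;> simp_all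
      rw [hf.coeff_eq_zero hd]
      have : ¬ (Finsupp.single (0:Fin 2) 1 = d) := fun h => h0 (h.symm)
      have h2 : ¬ (Finsupp.single (1:Fin 2) 1 = d) := fun h => h1 (h.symm)
      simp [this, h2]

lemma coeff_mul_homog_zero {k : ℕ} {h : MvPolynomial (Fin 2) ℤ} (hh : h.IsHomogeneous k)
    (A : MvPolynomial (Fin 2) ℤ) (d : Fin 2 →₀ ℕ) (hd : d.degree < k) : coeff d (A * h) = 0 := by
  rw [coeff_mul]
  apply Finset.sum_eq_zero
  rintro ⟨x, y⟩ hxy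
  have hm : x + y = d := Finset.HasAntidiagonal.mem_antidiagonal.mp hxy
  have hy0 : y 0 ≤ d 0 := by rw [← hm]; simp
  have hy1 : y 1 ≤ d 1 := by rw [← hm]; simp
  have : y.degree ≠ k := by rw [deg2]; rw [deg2] at hd; omega
  rw [hh.coeff_eq_zero this, mul_zero]

lemma prod_homog {g : Fin 2 → MvPolynomial (Fin 2) ℤ} (hg : ∀ i, (g i).IsHomogeneous 1)
    (d : Fin 2 →₀ ℕ) : (∏ i, g i ^ d i).IsHomogeneous d.degree := by
  rw [Fin.prod_univ_two, deg2]
  simpa using ((hg 0).pow (d 0)).mul ((hg 1).pow (d 1))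

lemma coeff_aeval_one {g : Fin 2 → MvPolynomial (Fin 2) ℤ}
    (hg : ∀ i, (g i).IsHomogeneous 1) (h : MvPolynomial (Fin 2) ℤ)
    {D : Fin 2 →₀ ℕ} (hD : D.degree = 1) :
    coeff D (aeval g h) =
      coeff e0 h * coeff D (g 0) + coeff e1 h * coeff D (g 1) := by
  classical
  rw [aeval_def, eval₂_eq' (algebraMap ℤ _) g h, coeff_sum]
  have key : ∀ d ∈ h.support,
      coeff D ((algebraMap ℤ _) (coeff d h) * ∏ i, g i ^ d i)
        = coeff d h * (if d = e0 then coeff D (g 0) else if d = e1 then coeff D (g 1) else 0) := by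
    intro d _
    rw [MvPolynomial.algebraMap_eq, coeff_C_mul]
    congr 1
    by_cases h0 : d = e0
    · subst h0; simp [Fin.prod_univ_two, Finsupp.single_apply]
    · by_cases h1 : d = e1
      · subst h1; simp [Fin.prod_univ_two, Finsupp.single_apply, e0_ne_e1.symm]
      · have hd : d.degree ≠ 1 := fun hh => by rcases classify1 hh with h|h <;> simp_all
        rw [(prod_homog hg d).coeff_eq_zero (hD ▸ fun hh => hd hh.symm)]
        simp [h0, h1]
  rw [Finset.sum_congr rfl key]
  set F : (Fin 2 →₀ ℕ) → ℤ :=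
    fun d => coeff d h * (if d = e0 then coeff D (g 0) else if d = e1 then coeff D (g 1) else 0)
    with hF
  have step1 : ∑ d ∈ h.support, F d = ∑ d ∈ h.support ∪ {e0, e1}, F d :=
    Finset.sum_subset Finset.subset_union_left
      (fun d _ hd => by rw [hF]; simp only []; rw [notMem_support_iff.mp hd, zero_mul])
  have step2 : ∑ d ∈ ({e0, e1} : Finset (Fin 2 →₀ ℕ)), F d = ∑ d ∈ h.support ∪ {e0, e1}, F d :=
    Finset.sum_subset Finset.subset_union_right
      (fun d _ hd => by
        simp only [Finset.mem_insert, Finset.mem_singleton, not_or] at hd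
        simp [hF, hd.1, hd.2])
  rw [step1, ← step2, Finset.sum_insert (by simpa using e0_ne_e1), Finset.sum_singleton]
  simp [hF, e0_ne_e1, e0_ne_e1.symm]

noncomputable def quad (d1 d2 d3 : ℤ) : MvPolynomial (Fin 2) ℤ :=
  C d1 * X 0 ^ 2 + C d2 * (X 0 * X 1) + C d3 * X 1 ^ 2

lemma coeff_quad (B : MvPolynomial (Fin 2) ℤ) (d1 d2 d3 : ℤ) :
    coeff D20 (B * quad d1 d2 d3) = coeff 0 B * d1 ∧
    coeff D11 (B * quad d1 d2 d3) = coeff 0 B * d2 ∧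
    coeff D02 (B * quad d1 d2 d3) = coeff 0 B * d3 := by
  classical
  have hq : B * quad d1 d2 d3 =
      ((B * C d1) * X 0) * X 0 + (((B * C d2) * X 0) * X 1 + ((B * C d3) * X 1) * X 1) := by
    rw [quad]; ring
  have h1 : (D20 - Finsupp.single 0 1 : Fin 2 →₀ ℕ) = e0 := by
    apply fin2_ext <;> simp [Finsupp.tsub_apply, Finsupp.single_apply]
  have h2 : (D11 - Finsupp.single 1 1 : Fin 2 →₀ ℕ) = e0 := by
    apply fin2_ext <;> simp [Finsupp.tsub_apply, Finsupp.add_apply, Finsupp.single_apply]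
  have h3 : (D02 - Finsupp.single 1 1 : Fin 2 →₀ ℕ) = e1 := by
    apply fin2_ext <;> simp [Finsupp.tsub_apply, Finsupp.single_apply]
  have h4 : (e0 - Finsupp.single 0 1 : Fin 2 →₀ ℕ) = 0 := by
    apply fin2_ext <;> simp [Finsupp.tsub_apply, Finsupp.single_apply]
  have h5 : (e1 - Finsupp.single 1 1 : Fin 2 →₀ ℕ) = 0 := by
    apply fin2_ext <;> simp [Finsupp.tsub_apply, Finsupp.single_apply]
  have hc : ∀ (c : ℤ) (B : MvPolynomial (Fin 2) ℤ), coeff 0 (B * C c) = coeff 0 B * c :=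
    fun c B => by rw [mul_comm, coeff_C_mul, mul_comm]
  have hc' : ∀ (c : ℤ) (B : MvPolynomial (Fin 2) ℤ),
      coeff 0 (B * (c : MvPolynomial (Fin 2) ℤ)) = coeff 0 B * c := by
    intro c B
    rw [show ((c : MvPolynomial (Fin 2) ℤ)) = C c from by simp [MvPolynomial.C_eq_coe_nat]]
    exact hc c B
  refine ⟨?_, ?_, ?_⟩ <;>
    rw [hq] <;>
    simp [coeff_mul_X', coeff_X_mul', Finsupp.mem_support_iff, Finsupp.single_apply,
      Finsupp.add_apply, h1, h2, h3, h4, h5, hc, hc']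

lemma degD20 : D20.degree = 2 := by rw [deg2]; simp [Finsupp.single_apply]
lemma degD11 : D11.degree = 2 := by
  rw [deg2]; simp [Finsupp.add_apply, Finsupp.single_apply]
lemma degD02 : D02.degree = 2 := by rw [deg2]; simp [Finsupp.single_apply]

lemma span_quad {n : ℕ} (hn : 1 < n) {G : MvPolynomial (Fin 2) ℤ}
    (hG : G.IsHomogeneous (n + 1)) {c1 c2 c3 d1 d2 d3 : ℤ}
    (hmem : quad c1 c2 c3 ∈ Ideal.span {G, quad d1 d2 d3}) :
    ∃ b, c1 = b * d1 ∧ c2 = b * d2 ∧ c3 = b * d3 := by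
  rw [Ideal.mem_span_pair] at hmem
  obtain ⟨A, B, hAB⟩ := hmem
  have hone : coeff (0 : Fin 2 →₀ ℕ) (1 : MvPolynomial (Fin 2) ℤ) = 1 := by simp
  refine ⟨coeff 0 B, ?_, ?_, ?_⟩
  · have h1 := congrArg (coeff D20) hAB
    rw [coeff_add, coeff_mul_homog_zero hG A D20 (by rw [degD20]; omega), zero_add,
      (coeff_quad B d1 d2 d3).1] at h1
    have h2 := (coeff_quad 1 c1 c2 c3).1
    rw [one_mul, hone, one_mul] at h2
    rw [← h2]; exact h1.symm
  · have h1 := congrArg (coeff D11) hAB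
    rw [coeff_add, coeff_mul_homog_zero hG A D11 (by rw [degD11]; omega), zero_add,
      (coeff_quad B d1 d2 d3).2.1] at h1
    have h2 := (coeff_quad 1 c1 c2 c3).2.1
    rw [one_mul, hone, one_mul] at h2
    rw [← h2]; exact h1.symm
  · have h1 := congrArg (coeff D02) hAB
    rw [coeff_add, coeff_mul_homog_zero hG A D02 (by rw [degD02]; omega), zero_add,
      (coeff_quad B d1 d2 d3).2.2] at h1
    have h2 := (coeff_quad 1 c1 c2 c3).2.2
    rw [one_mul, hone, one_mul] at h2
    rw [← h2]; exact h1.symm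

lemma arith_final (p q r s a a' b0 b1 al be ga de : ℤ)
    (e1 : r * (a * p + r) = 0)
    (e2 : r * (a * q + s) + s * (a * p + r) = b0 * a')
    (e3 : s * (a * q + s) = b0 * 1)
    (f2 : a' = b1 * (r * (a * q + s) + s * (a * p + r)))
    (f3 : (1 : ℤ) = b1 * (s * (a * q + s)))
    (g1 : al * p + be * r = 1) (g2 : al * q + be * s = 0)
    (g3 : ga * p + de * r = 0) (g4 : ga * q + de * s = 1) :
    |a| = |a'| := by
  have hdet : (p * s - q * r) * (al * de - be * ga) = 1 := by
    have h : (p * s - q * r) * (al * de - be * ga)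
        = (al * p + be * r) * (ga * q + de * s) - (al * q + be * s) * (ga * p + de * r) := by ring
    rw [g1, g2, g3, g4] at h; linarith
  have hb0 : |b0| = 1 := by
    have : b0 * b1 = 1 := by rw [e3] at f3; linarith [f3]; 
    rcases Int.eq_one_or_neg_one_of_mul_eq_one this with h | h <;> simp [h]
  rcases mul_eq_zero.mp e1 with hr | hu
  · -- r = 0
    subst hr
    have key : a * (p * s) = b0 * a' := by linear_combination e2
    have hps : |p * s| = 1 := by
      have h' : (p * s) * (al * de - be * ga) = 1 := by linear_combination hdet
      rcases Int.eq_one_or_neg_one_of_mul_eq_one h' with h | h <;> simp [h]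
    have : |a| * |p * s| = |b0| * |a'| := by rw [← abs_mul, ← abs_mul, key]
    rw [hps, hb0, mul_one, one_mul] at this
    exact this
  · -- a*p + r = 0
    have key : a * (p * (a * q + s)) = -(b0 * a') := by
      linear_combination (a * q + s + s) * hu - e2
    have hpv : |p * (a * q + s)| = 1 := by
      have h' : (p * (a * q + s)) * (al * de - be * ga) = 1 := by
        linear_combination hdet + (al * de - be * ga) * q * hu
      rcases Int.eq_one_or_neg_one_of_mul_eq_one h' with h | h <;> simp [h]
    have habs : |a| * |p * (a * q + s)| = |b0| * |a'| := by
      rw [← abs_mul, ← abs_mul, key, abs_neg]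
    rw [hpv, hb0, mul_one, one_mul] at habs
    exact habs


/-- A graded ring isomorphism between `ℤ[x₁,x₂]/I` and `ℤ[x₁,x₂]/J` (generators in
degree 2) corresponds to a degree-preserving automorphism of the polynomial ring,
i.e. a linear (degree-one) substitution, which is bijective and carries `I` onto `J`. -/
def IsGradedIso (I J : Ideal (MvPolynomial (Fin 2) ℤ)) : Prop :=
  ∃ g : Fin 2 → MvPolynomial (Fin 2) ℤ,
    (∀ i, (g i).IsHomogeneous 1) ∧
    Function.Bijective ⇑(MvPolynomial.aeval (R := ℤ) g) ∧
    Ideal.map (MvPolynomial.aeval (R := ℤ) g) I = J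

theorem stmt0 (n : ℕ) (hn : 1 < n) (a a' : ℤ) :
    IsGradedIso
      (Ideal.span {(X 0 : MvPolynomial (Fin 2) ℤ) ^ (n + 1), X 1 * (C a * X 0 + X 1)})
      (Ideal.span {(X 0 : MvPolynomial (Fin 2) ℤ) ^ (n + 1), X 1 * (C a' * X 0 + X 1)})
    ↔ |a| = |a'| := by
  constructor
  · rintro ⟨g, hg, hbij, hmap⟩
    set p := coeff e0 (g 0) with hp
    set q := coeff e1 (g 0) with hq
    set r := coeff e0 (g 1) with hr
    set s := coeff e1 (g 1) with hs
    have hg0 : g 0 = C p * X 0 + C q * X 1 := linear_form (hg 0)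
    have hg1 : g 1 = C r * X 0 + C s * X 1 := linear_form (hg 1)
    -- the image of the degree-2 generator
    have hcalc : aeval (R := ℤ) g (X 1 * (C a * X 0 + X 1)) =
        quad (r * (a * p + r)) (r * (a * q + s) + s * (a * p + r)) (s * (a * q + s)) := by
      rw [map_mul, map_add, map_mul, aeval_X, aeval_X, aeval_C, MvPolynomial.algebraMap_eq,
        hg0, hg1, quad]
      simp only [C_mul, C_add]
      ring
    have hqa' : (X 1 : MvPolynomial (Fin 2) ℤ) * (C a' * X 0 + X 1) = quad 0 a' 1 := by
      rw [quad, C_0, C_1]; ring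
    -- membership 1
    have hmem1 : quad (r * (a * p + r)) (r * (a * q + s) + s * (a * p + r)) (s * (a * q + s))
        ∈ Ideal.span {(X 0 : MvPolynomial (Fin 2) ℤ) ^ (n + 1), quad 0 a' 1} := by
      rw [← hqa', ← hcalc]
      exact hmap ▸ Ideal.mem_map_of_mem _
        (Ideal.subset_span (Set.mem_insert_of_mem _ rfl))
    have hGX : ((X 0 : MvPolynomial (Fin 2) ℤ) ^ (n + 1)).IsHomogeneous (n + 1) := by
      simpa using (isHomogeneous_X ℤ (0 : Fin 2)).pow (n + 1)
    obtain ⟨b0, he1, he2, he3⟩ := span_quad hn hGX hmem1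
    rw [mul_zero] at he1
    -- membership 2
    have hmem2 : quad 0 a' 1 ∈ Ideal.span
        {(aeval (R := ℤ) g) ((X 0 : MvPolynomial (Fin 2) ℤ) ^ (n + 1)),
          quad (r * (a * p + r)) (r * (a * q + s) + s * (a * p + r)) (s * (a * q + s))} := by
      rw [← hcalc, ← Set.image_pair, ← Ideal.map_span, hmap, ← hqa']
      exact Ideal.subset_span (Set.mem_insert_of_mem _ rfl)
    have hGg : ((aeval (R := ℤ) g) ((X 0 : MvPolynomial (Fin 2) ℤ) ^ (n + 1))).IsHomogeneous
        (n + 1) := by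
      rw [map_pow, aeval_X]
      simpa using (hg 0).pow (n + 1)
    obtain ⟨b1, hf1, hf2, hf3⟩ := span_quad hn hGg hmem2
    -- surjectivity gives the determinant condition
    obtain ⟨h0, hh0⟩ := hbij.2 (X 0)
    obtain ⟨h1, hh1⟩ := hbij.2 (X 1)
    have dege0 : e0.degree = 1 := by rw [deg2]; simp [Finsupp.single_apply]
    have dege1 : e1.degree = 1 := by rw [deg2]; simp [Finsupp.single_apply]
    have cx00 : coeff e0 (X 0 : MvPolynomial (Fin 2) ℤ) = 1 := by simp [coeff_X']
    have cx01 : coeff e1 (X 0 : MvPolynomial (Fin 2) ℤ) = 0 := by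
      simp [coeff_X', e0_ne_e1]
    have cx10 : coeff e0 (X 1 : MvPolynomial (Fin 2) ℤ) = 0 := by
      simp [coeff_X', e0_ne_e1.symm]
    have cx11 : coeff e1 (X 1 : MvPolynomial (Fin 2) ℤ) = 1 := by simp [coeff_X']
    have g1' := (coeff_aeval_one hg h0 dege0).symm.trans (by rw [hh0, cx00])
    have g2' := (coeff_aeval_one hg h0 dege1).symm.trans (by rw [hh0, cx01])
    have g3' := (coeff_aeval_one hg h1 dege0).symm.trans (by rw [hh1, cx10])
    have g4' := (coeff_aeval_one hg h1 dege1).symm.trans (by rw [hh1, cx11])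
    exact arith_final p q r s a a' b0 b1 (coeff e0 h0) (coeff e1 h0) (coeff e0 h1) (coeff e1 h1)
      he1 (by linarith [he2]) (by linarith [he3]) hf2 (by linarith [hf3])
      g1' g2' g3' g4'
  · intro h
    obtain ⟨e, he, hea⟩ : ∃ e : ℤ, e * e = 1 ∧ a' = e * a := by
      rcases abs_eq_abs.mp h with h | h
      exacts [⟨1, by ring, by omega⟩, ⟨-1, by ring, by omega⟩]
    have hCC : (C e : MvPolynomial (Fin 2) ℤ) * C e = 1 := by rw [← C_mul, he, C_1]
    refine ⟨(![X 0, C e * X 1] : Fin 2 → MvPolynomial (Fin 2) ℤ), ?_, ?_, ?_⟩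
    · intro i
      fin_cases i
      · simpa using isHomogeneous_X ℤ (0 : Fin 2)
      · simpa using (isHomogeneous_C (Fin 2) e).mul (isHomogeneous_X ℤ (1 : Fin 2))
    · have hcomp : (aeval (R := ℤ) (![X 0, C e * X 1] : Fin 2 → MvPolynomial (Fin 2) ℤ)).comp
          (aeval (R := ℤ) (![X 0, C e * X 1] : Fin 2 → MvPolynomial (Fin 2) ℤ))
          = AlgHom.id ℤ (MvPolynomial (Fin 2) ℤ) := by
        apply MvPolynomial.algHom_ext
        intro i
        fin_cases i
        · simp
        · simp only [AlgHom.coe_comp, Function.comp_apply, AlgHom.coe_id, id_eq]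
          rw [show ((⟨1, by omega⟩ : Fin 2)) = (1 : Fin 2) from rfl, aeval_X]
          simp only [Matrix.cons_val_one, Matrix.head_cons, Matrix.cons_val_zero, map_mul, aeval_X, aeval_C,
            MvPolynomial.algebraMap_eq]
          rw [← mul_assoc, hCC, one_mul]
      exact Function.Involutive.bijective (fun f => DFunLike.congr_fun hcomp f)
    · have h1 : (aeval (R := ℤ) (![X 0, C e * X 1] : Fin 2 → MvPolynomial (Fin 2) ℤ))
          ((X 0 : MvPolynomial (Fin 2) ℤ) ^ (n + 1)) = X 0 ^ (n + 1) := by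
        rw [map_pow, aeval_X]; simp
      have h2 : (aeval (R := ℤ) (![X 0, C e * X 1] : Fin 2 → MvPolynomial (Fin 2) ℤ))
          ((X 1 : MvPolynomial (Fin 2) ℤ) * (C a * X 0 + X 1))
          = X 1 * (C a' * X 0 + X 1) := by
        rw [map_mul, map_add, map_mul, aeval_X, aeval_X, aeval_C, MvPolynomial.algebraMap_eq,
          hea, C_mul]
        simp only [Matrix.cons_val_zero, Matrix.cons_val_one, Matrix.head_cons]
        rw [show (C e : MvPolynomial (Fin 2) ℤ) * X 1 * (C a * X 0 + C e * X 1)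
            = C e * C a * (X 0 * X 1) + (C e * C e) * (X 1 * X 1) from by ring, hCC, one_mul]
        ring
      rw [Ideal.map_span, Set.image_pair, h1, h2]
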